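/- Let α > 0 be real and b ≥ 1 an integer, and define T(z) = 1 − (1−(α+1)z)^{1/(α+1)} for real z < 1/(α+1). Then for every z < 1/(α+1) the b-th derivative of T satisfies T^{(b)}(z) = (b−1)!·(α+1)^{b−1}·C(b−1−1/(α+1), b−1)·(1−T(z))^{−((α+1)b−1)}; moreover T(0) = 0 and T^{(k)}(0) = (k−1)!·(α+1)^{k−1}·C(k−1−1/(α+1), k−1) for every 1 ≤ k ≤ b−1. (This verifies that T is the exponential generating function of (b,α)-plane oriented recursive trees.) -/

import Mathlib

/-- The generalized binomial coefficient `C(x, n) = x(x-1)⋯(x-n+1)/n!`. -/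
noncomputable def genBinom (x : ℝ) (n : ℕ) : ℝ :=
    (∏ i ∈ Finset.range n, (x - i)) / (n.factorial : ℝ)

private lemma base_pos (α : ℝ) (hα : 0 < α) {z : ℝ} (hz : z < 1 / (α + 1)) :
    0 < 1 - (α + 1) * z := by
  have h1 : (0:ℝ) < α + 1 := by linarith
  have h2 : (α + 1) * z < 1 := by
    rw [mul_comm]; exact (lt_div_iff₀ h1).mp hz
  linarith

private lemma key_deriv (α : ℝ) (hα : 0 < α) (p : ℝ) {z : ℝ} (hz : z < 1 / (α + 1)) :
    HasDerivAt (fun z : ℝ => (1 - (α + 1) * z) ^ p)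
      (p * (1 - (α + 1) * z) ^ (p - 1) * (-(α + 1))) z := by
  have hu : 0 < 1 - (α + 1) * z := base_pos α hα hz
  have hinner : HasDerivAt (fun z : ℝ => 1 - (α + 1) * z) (-(α + 1)) z := by
    simpa using ((hasDerivAt_id z).const_mul (α + 1)).const_sub 1
  exact (Real.hasDerivAt_rpow_const (Or.inl (ne_of_gt hu))).comp z hinner

private lemma key (α : ℝ) (hα : 0 < α) (n : ℕ) :
    ∀ z : ℝ, z < 1 / (α + 1) →
      iteratedDeriv (n + 1) (fun z : ℝ => 1 - (1 - (α + 1) * z) ^ (1 / (α + 1))) z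
        = (-1 : ℝ) ^ n * (α + 1) ^ (n + 1)
            * (∏ i ∈ Finset.range (n + 1), (1 / (α + 1) - i))
            * (1 - (α + 1) * z) ^ (1 / (α + 1) - (n + 1)) := by
  induction n with
  | zero =>
      intro z hz
      rw [iteratedDeriv_one]
      have h := ((key_deriv α hα (1 / (α + 1)) hz).const_sub 1).deriv
      rw [h]
      simp [Finset.prod_range_one]
      ring
  | succ n ih =>
      intro z hz
      rw [iteratedDeriv_succ]
      have hev : (iteratedDeriv (n + 1) (fun z : ℝ => 1 - (1 - (α + 1) * z) ^ (1 / (α + 1))))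
          =ᶠ[nhds z] (fun y : ℝ => (-1 : ℝ) ^ n * (α + 1) ^ (n + 1)
            * (∏ i ∈ Finset.range (n + 1), (1 / (α + 1) - i))
            * (1 - (α + 1) * y) ^ (1 / (α + 1) - (n + 1))) := by
        filter_upwards [Iio_mem_nhds hz] with y hy
        exact ih y hy
      rw [hev.deriv_eq]
      have h := ((key_deriv α hα (1 / (α + 1) - (n + 1)) hz).const_mul
        ((-1 : ℝ) ^ n * (α + 1) ^ (n + 1)
          * (∏ i ∈ Finset.range (n + 1), (1 / (α + 1) - i)))).deriv
      rw [h]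
      conv_rhs => rw [Finset.prod_range_succ]
      push_cast
      rw [show (1 / (α + 1) - ((n : ℝ) + 1) - 1) = 1 / (α + 1) - ((n : ℝ) + 1 + 1) by ring]
      ring

private lemma coeff (α : ℝ) (hα : 0 < α) (n : ℕ) :
    (-1 : ℝ) ^ n * (α + 1) ^ (n + 1) * (∏ i ∈ Finset.range (n + 1), (1 / (α + 1) - i))
      = (n.factorial : ℝ) * (α + 1) ^ n * genBinom ((n : ℝ) - 1 / (α + 1)) n := by
  have h1 : (0:ℝ) < α + 1 := by linarith
  have hne : (α + 1 : ℝ) ≠ 0 := ne_of_gt h1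
  have hfact : (n.factorial : ℝ) ≠ 0 := Nat.cast_ne_zero.mpr n.factorial_ne_zero
  rw [genBinom]
  rw [Finset.prod_range_succ']
  have hrefl : (∏ i ∈ Finset.range n, ((n : ℝ) - 1 / (α + 1) - i))
      = ∏ i ∈ Finset.range n, ((i : ℝ) + 1 - 1 / (α + 1)) := by
    rw [← Finset.prod_range_reflect (fun j : ℕ => (j : ℝ) + 1 - 1 / (α + 1)) n]
    apply Finset.prod_congr rfl
    intro j hj
    have hj' : j < n := Finset.mem_range.mp hj
    have hcast : ((n - 1 - j : ℕ) : ℝ) = (n : ℝ) - 1 - j := by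
      rw [Nat.sub_sub]
      rw [Nat.cast_sub (by omega : 1 + j ≤ n)]
      push_cast; ring
    simp only [hcast]; ring
  rw [hrefl]
  have hsign : (∏ i ∈ Finset.range n, (1 / (α + 1) - ((i + 1 : ℕ) : ℝ)))
      = (-1 : ℝ) ^ n * ∏ i ∈ Finset.range n, ((i : ℝ) + 1 - 1 / (α + 1)) := by
    have : ∀ i ∈ Finset.range n, (1 / (α + 1) - ((i + 1 : ℕ) : ℝ))
        = (-1) * ((i : ℝ) + 1 - 1 / (α + 1)) := by
      intro i _; push_cast; ring
    rw [Finset.prod_congr rfl this, Finset.prod_mul_distrib, Finset.prod_const,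
      Finset.card_range]
  rw [hsign]
  set P : ℝ := ∏ i ∈ Finset.range n, ((i : ℝ) + 1 - 1 / (α + 1)) with hP
  have h2 : (n.factorial : ℝ) * (α + 1) ^ n * (P / (n.factorial : ℝ))
      = (α + 1) ^ n * P := by
    field_simp
  rw [h2]
  have hsq : ((-1 : ℝ) ^ n) * ((-1 : ℝ) ^ n) = 1 := by
    rw [← mul_pow]; norm_num
  have hpow : (α + 1 : ℝ) ^ (n + 1) * (1 / (α + 1)) = (α + 1) ^ n := by
    rw [pow_succ]; field_simp
  rw [show ((0 : ℕ) : ℝ) = 0 by norm_num]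
  calc (-1 : ℝ) ^ n * (α + 1) ^ (n + 1) * ((-1 : ℝ) ^ n * P * (1 / (α + 1) - 0))
      = (((-1 : ℝ) ^ n) * ((-1 : ℝ) ^ n)) * ((α + 1) ^ (n + 1) * (1 / (α + 1))) * P := by
        ring
    _ = (α + 1) ^ n * P := by rw [hsq, hpow]; ring

theorem bport_egf_ode (b : ℕ) (hb : 1 ≤ b) (α : ℝ) (hα : 0 < α) :
    (∀ z : ℝ, z < 1 / (α + 1) →
      iteratedDeriv b (fun z : ℝ => 1 - (1 - (α + 1) * z) ^ (1 / (α + 1))) z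
        = ((b - 1).factorial : ℝ) * (α + 1) ^ (b - 1)
            * genBinom ((b : ℝ) - 1 - 1 / (α + 1)) (b - 1)
            * (1 - (1 - (1 - (α + 1) * z) ^ (1 / (α + 1)))) ^ (-((α + 1) * b - 1))) ∧
    (1 - (1 - (α + 1) * (0 : ℝ)) ^ (1 / (α + 1)) = 0) ∧
    (∀ k : ℕ, 1 ≤ k → k ≤ b - 1 →
      iteratedDeriv k (fun z : ℝ => 1 - (1 - (α + 1) * z) ^ (1 / (α + 1))) 0
        = ((k - 1).factorial : ℝ) * (α + 1) ^ (k - 1)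
            * genBinom ((k : ℝ) - 1 - 1 / (α + 1)) (k - 1)) := by
  have h1 : (0:ℝ) < α + 1 := by linarith
  refine ⟨?_, ?_, ?_⟩
  · obtain ⟨n, rfl⟩ : ∃ n, b = n + 1 := ⟨b - 1, (Nat.succ_pred_eq_of_pos hb).symm⟩
    intro z hz
    have hu : (0:ℝ) < 1 - (α + 1) * z := base_pos α hα hz
    rw [key α hα n z hz]
    have hTc : (1 - (1 - (1 - (α + 1) * z) ^ (1 / (α + 1))))
        = (1 - (α + 1) * z) ^ (1 / (α + 1)) := by ring
    rw [hTc, ← Real.rpow_mul hu.le]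
    rw [show (1 / (α + 1)) * (-((α + 1) * (((n:ℕ) + 1 : ℕ) : ℝ) - 1))
        = 1 / (α + 1) - ((n : ℝ) + 1) by push_cast; field_simp; ring]
    simp only [Nat.add_sub_cancel]
    rw [coeff α hα n]
    rw [show (((n:ℕ) + 1 : ℕ) : ℝ) - 1 - 1 / (α + 1) = (n : ℝ) - 1 / (α + 1) by
      push_cast; ring]
  · norm_num [Real.one_rpow]
  · intro k hk1 hk2
    obtain ⟨m, rfl⟩ : ∃ m, k = m + 1 := ⟨k - 1, (Nat.succ_pred_eq_of_pos hk1).symm⟩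
    have h0 : (0:ℝ) < 1 / (α + 1) := by positivity
    rw [key α hα m 0 h0]
    simp only [mul_zero, sub_zero, Real.one_rpow, mul_one, Nat.add_sub_cancel]
    rw [coeff α hα m]
    rw [show (((m:ℕ) + 1 : ℕ) : ℝ) - 1 - 1 / (α + 1) = (m : ℝ) - 1 / (α + 1) by
      push_cast; ring]
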